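/- If u : Ω → ℝ is measurable with u > 0 almost everywhere and (1/2)∫_a^b m(s) ds < F(s_*) · μ(Ω), then there exists t_0 > 0 such that for every t ≥ t_0 one has (1/2)∫_a^b m(s) ds − ∫_Ω F_*(t·u(x)) dμ < 0. -/

import Mathlib

open MeasureTheory Filter

/-- The truncation `f_*` of `f` at level `s_*`. -/
noncomputable def fstar (f : ℝ → ℝ) (sstar : ℝ) (t : ℝ) : ℝ :=
  if t < 0 then f 0 else if t < sstar then f t else 0

/-- `F(t) = ∫_0^t f(s) ds`. -/
noncomputable def Fprim (f : ℝ → ℝ) (t : ℝ) : ℝ := ∫ s in (0:ℝ)..t, f s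

/-- `F_*(t) = ∫_0^t f_*(s) ds`. -/
noncomputable def Fstar (f : ℝ → ℝ) (sstar : ℝ) (t : ℝ) : ℝ :=
  ∫ s in (0:ℝ)..t, fstar f sstar s

lemma fstar_eq (f : ℝ → ℝ) (sstar : ℝ) (hs : 0 < sstar) (hfs : f sstar = 0) :
    fstar f sstar = fun t => f (min (max t 0) sstar) := by
  funext t
  unfold fstar
  rcases lt_or_ge t 0 with h | h
  · rw [if_pos h, max_eq_right h.le, min_eq_left hs.le]
  · rw [if_neg (not_lt.2 h), max_eq_left h]
    rcases lt_or_ge t sstar with h2 | h2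
    · rw [if_pos h2, min_eq_left h2.le]
    · rw [if_neg (not_lt.2 h2), min_eq_right h2]
      exact hfs.symm

theorem eventually_neg_energy {Ω : Type*} [MeasurableSpace Ω]
    (μ : Measure Ω) [IsFiniteMeasure μ]
    (f : ℝ → ℝ) (sstar : ℝ)
    (hf : Continuous f) (hs : 0 < sstar)
    (hfpos : ∀ t ∈ Set.Ioo (0 : ℝ) sstar, 0 < f t)
    (hfs : f sstar = 0)
    (m : ℝ → ℝ) (a b : ℝ) (hm : Continuous m) (ha : 0 ≤ a) (hab : a < b)
    (hmpos : ∀ t ∈ Set.Ioo a b, 0 < m t) (hmb : m b = 0)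
    (u : Ω → ℝ) (hu : Measurable u) (hu0 : ∀ᵐ x ∂μ, 0 < u x)
    (harea : (1/2) * ∫ s in a..b, m s < Fprim f sstar * (μ Set.univ).toReal) :
    ∃ t₀ : ℝ, 0 < t₀ ∧ ∀ t : ℝ, t₀ ≤ t →
      (1/2) * (∫ s in a..b, m s) - ∫ x, Fstar f sstar (t * u x) ∂μ < 0 := by
  -- f 0 ≥ 0
  have hf0 : 0 ≤ f 0 := by
    have htd : Filter.Tendsto f (nhdsWithin 0 (Set.Ioi 0)) (nhds (f 0)) :=
      (hf.tendsto 0).mono_left nhdsWithin_le_nhds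
    refine ge_of_tendsto htd ?_
    filter_upwards [Ioo_mem_nhdsGT_of_mem (by constructor <;> simp [hs] : (0:ℝ) ∈ Set.Ico 0 sstar)]
      with t ht
    exact (hfpos t ht).le
  have hfnn : ∀ t ∈ Set.Icc (0:ℝ) sstar, 0 ≤ f t := by
    intro t ht
    rcases eq_or_lt_of_le ht.1 with h | h
    · exact h ▸ hf0
    rcases eq_or_lt_of_le ht.2 with h2 | h2
    · rw [h2, hfs]
    exact (hfpos t ⟨h, h2⟩).le
  have heq := fstar_eq f sstar hs hfs
  have hcont : Continuous (fstar f sstar) := by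
    rw [heq]; fun_prop
  have hstnn : ∀ t, 0 ≤ fstar f sstar t := by
    intro t
    rw [heq]
    exact hfnn _ ⟨le_min (le_max_right _ _) hs.le, min_le_right _ _⟩
  have hint : ∀ p q : ℝ, IntervalIntegrable (fstar f sstar) volume p q :=
    fun p q => hcont.intervalIntegrable p q
  have hFmono : Monotone (Fstar f sstar) := by
    intro s s' hss
    have h1 : Fstar f sstar s' - Fstar f sstar s = ∫ t in s..s', fstar f sstar t := by
      unfold Fstar
      rw [intervalIntegral.integral_interval_sub_left (hint 0 s') (hint 0 s)]
    have h2 : 0 ≤ ∫ t in s..s', fstar f sstar t :=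
      intervalIntegral.integral_nonneg hss (fun t _ => hstnn t)
    linarith
  have hFeq : ∀ s : ℝ, sstar ≤ s → Fstar f sstar s = Fprim f sstar := by
    intro s hss
    unfold Fstar Fprim
    rw [← intervalIntegral.integral_add_adjacent_intervals (hint 0 sstar) (hint sstar s)]
    have e1 : (∫ t in sstar..s, fstar f sstar t) = 0 := by
      rw [intervalIntegral.integral_congr (g := fun _ => (0:ℝ))]
      · exact intervalIntegral.integral_zero
      · intro t ht
        rw [Set.uIcc_of_le hss] at ht
        unfold fstar
        rw [if_neg (not_lt.2 (le_trans hs.le ht.1)), if_neg (not_lt.2 ht.1)]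
    have e2 : (∫ t in (0:ℝ)..sstar, fstar f sstar t) = ∫ t in (0:ℝ)..sstar, f t := by
      refine intervalIntegral.integral_congr ?_
      intro t ht
      rw [Set.uIcc_of_le hs.le] at ht
      rw [heq]
      simp only
      rw [max_eq_left ht.1, min_eq_left ht.2]
    rw [e1, e2, add_zero]
  have hFle : ∀ s : ℝ, Fstar f sstar s ≤ Fprim f sstar := by
    intro s
    calc Fstar f sstar s ≤ Fstar f sstar (max s sstar) := hFmono (le_max_left _ _)
    _ = Fprim f sstar := hFeq _ (le_max_right _ _)
  have hF0 : ∀ s : ℝ, 0 ≤ s → 0 ≤ Fstar f sstar s := by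
    intro s hs0
    have : Fstar f sstar 0 = 0 := by unfold Fstar; simp
    rw [← this]; exact hFmono hs0
  -- convergence of the integrals
  have htend : Filter.Tendsto (fun t => ∫ x, Fstar f sstar (t * u x) ∂μ) atTop
      (nhds (Fprim f sstar * (μ Set.univ).toReal)) := by
    have hconst : (∫ (_ : Ω), Fprim f sstar ∂μ) = Fprim f sstar * (μ Set.univ).toReal := by
      rw [integral_const, smul_eq_mul, measureReal_def]; ring
    rw [← hconst]
    refine tendsto_integral_filter_of_dominated_convergence
      (fun _ => Fprim f sstar) ?_ ?_ (integrable_const _) ?_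
    · filter_upwards with t
      exact ((hFmono.measurable.comp (hu.const_mul t)).aestronglyMeasurable)
    · filter_upwards [eventually_ge_atTop (0:ℝ)] with t ht
      filter_upwards [hu0] with x hx
      rw [Real.norm_eq_abs, abs_of_nonneg (hF0 _ (mul_nonneg ht hx.le))]
      exact hFle _
    · filter_upwards [hu0] with x hx
      refine Filter.Tendsto.congr' ?_ tendsto_const_nhds
      filter_upwards [eventually_ge_atTop (sstar / u x)] with t ht
      have : sstar ≤ t * u x := by
        rw [div_le_iff₀ hx] at ht
        linarith
      exact (hFeq _ this).symm
  have hev : ∀ᶠ t in atTop,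
      (1/2) * ∫ s in a..b, m s < ∫ x, Fstar f sstar (t * u x) ∂μ :=
    htend.eventually (eventually_gt_nhds harea)
  rcases (hev.and (eventually_ge_atTop (1:ℝ))).exists_forall_of_atTop with ⟨c, hc⟩
  refine ⟨max c 1, lt_of_lt_of_le one_pos (le_max_right _ _), fun t ht => ?_⟩
  have := (hc t (le_trans (le_max_left _ _) ht)).1
  linarith
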